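/- arXiv:1004.0650 — 2 statements merged into one kernel-verified Lean document; each statement's English description precedes it below -/
import Mathlib

section
/- If h ≥ 0 and ρ := −log(1 − √(1 − e^{−2h})) (with ρ = 0 when h = 0), then ρ ≤ √(2h) + 2h. -/
theorem stmt_6 (h : ℝ) (hh : 0 ≤ h) :
    -Real.log (1 - Real.sqrt (1 - Real.exp (-2 * h))) ≤ Real.sqrt (2 * h) + 2 * h := by
  set x := Real.sqrt (1 - Real.exp (-2 * h)) with hx
  have hexp_pos : 0 < Real.exp (-2 * h) := Real.exp_pos _
  have hexp_le : Real.exp (-2 * h) ≤ 1 := by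
    rw [Real.exp_le_one_iff]; nlinarith
  have hx_nonneg : 0 ≤ x := Real.sqrt_nonneg _
  have hx_sq : x ^ 2 = 1 - Real.exp (-2 * h) := by
    rw [hx, Real.sq_sqrt]; linarith
  have hx_lt_one : x < 1 := by nlinarith
  have h1x : 1 - x = Real.exp (-2 * h) / (1 + x) := by
    have heq : Real.exp (-(2 * h)) = Real.exp (-2 * h) := by ring_nf
    field_simp [heq]
    nlinarith
  have hlog : Real.log (1 - x) = -2 * h - Real.log (1 + x) := by
    rw [h1x, Real.log_div (ne_of_gt hexp_pos) (by positivity), Real.log_exp]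
  have hlog_le : Real.log (1 + x) ≤ x := by
    have := Real.log_le_sub_one_of_pos (x := 1 + x) (by positivity)
    linarith
  have hx_le : x ≤ Real.sqrt (2 * h) := by
    rw [hx]
    apply Real.sqrt_le_sqrt
    nlinarith [Real.add_one_le_exp (-2 * h)]
  rw [hlog]
  linarith
end

section
/- Suppose (r_ℓ)_{ℓ≥1} are nonnegative reals with r_ℓ → 0 as ℓ → ∞, and (b_ℓ)_{ℓ≥1} are positive integers with Σ_{ℓ=1}^∞ b_ℓ e^{−r_1−⋯−r_{ℓ−1}} = ∞. Then the infimum over M ≥ 1 of δ̄((r_ℓ)_{ℓ=1}^M, (b_ℓ)_{ℓ=1}^M) = (1 + Σ_{ℓ=1}^M b_ℓ e^{−r_1−⋯−r_{ℓ−1}}(1 − e^{−r_ℓ})) / (Σ_{ℓ=1}^M b_ℓ e^{−r_1−⋯−r_{ℓ−1}}) is zero. -/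
open Filter Topology

theorem stmt_9 (r : ℕ → ℝ) (b : ℕ → ℕ)
    (hr : ∀ ℓ, 0 ≤ r ℓ) (hr0 : Tendsto r atTop (𝓝 0)) (hb : ∀ ℓ, 0 < b ℓ)
    (hdiv : Tendsto
      (fun M => ∑ ℓ ∈ Finset.Icc 1 M,
        (b ℓ : ℝ) * Real.exp (-(∑ k ∈ Finset.Icc 1 (ℓ - 1), r k))) atTop atTop) :
    sInf {x : ℝ | ∃ M : ℕ, 1 ≤ M ∧
      x = (1 + ∑ ℓ ∈ Finset.Icc 1 M,
              (b ℓ : ℝ) * Real.exp (-(∑ k ∈ Finset.Icc 1 (ℓ - 1), r k)) *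
                (1 - Real.exp (-r ℓ))) /
            (∑ ℓ ∈ Finset.Icc 1 M,
              (b ℓ : ℝ) * Real.exp (-(∑ k ∈ Finset.Icc 1 (ℓ - 1), r k)))} = 0 := by
  set tf : ℕ → ℝ := fun ℓ => (b ℓ : ℝ) * Real.exp (-(∑ k ∈ Finset.Icc 1 (ℓ - 1), r k)) with htf
  set tg : ℕ → ℝ := fun ℓ => tf ℓ * (1 - Real.exp (-r ℓ)) with htg
  have htfpos : ∀ ℓ, 0 < tf ℓ := fun ℓ => by
    have := hb ℓ
    positivity
  have hone : ∀ ℓ, 0 ≤ 1 - Real.exp (-r ℓ) := fun ℓ => by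
    have : Real.exp (-r ℓ) ≤ 1 := Real.exp_le_one_iff.mpr (neg_nonpos.mpr (hr ℓ))
    linarith
  have htgnn : ∀ ℓ, 0 ≤ tg ℓ := fun ℓ => mul_nonneg (htfpos ℓ).le (hone ℓ)
  set f : ℕ → ℝ := fun M => ∑ ℓ ∈ Finset.Icc 1 M, tf ℓ with hf
  set g : ℕ → ℝ := fun M => ∑ ℓ ∈ Finset.Icc 1 M, tg ℓ with hg
  set S : Set ℝ := {x : ℝ | ∃ M : ℕ, 1 ≤ M ∧ x = (1 + g M) / f M} with hS
  have hfpos : ∀ M, 1 ≤ M → 0 < f M := fun M hM =>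
    Finset.sum_pos (fun i _ => htfpos i) ⟨1, Finset.mem_Icc.mpr ⟨le_refl 1, hM⟩⟩
  have hgnn : ∀ M, 0 ≤ g M := fun M => Finset.sum_nonneg fun i _ => htgnn i
  have hSnn : ∀ x ∈ S, 0 ≤ x := by
    rintro x ⟨M, hM, rfl⟩
    exact div_nonneg (by linarith [hgnn M]) (hfpos M hM).le
  have hne : S.Nonempty := ⟨(1 + g 1) / f 1, 1, le_refl 1, rfl⟩
  have hbdd : BddBelow S := ⟨0, fun x hx => hSnn x hx⟩
  have hlow : 0 ≤ sInf S := le_csInf hne hSnn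
  have hkey : ∀ ε : ℝ, 0 < ε → ∃ x ∈ S, x < ε := by
    intro ε hε
    obtain ⟨L, hL⟩ := (hr0.eventually (Metric.ball_mem_nhds 0 (half_pos hε))).exists_forall_of_atTop
    have hrsmall : ∀ ℓ, L ≤ ℓ → r ℓ ≤ ε / 2 := by
      intro ℓ hℓ
      have := hL ℓ hℓ
      rw [Real.dist_eq, sub_zero] at this
      exact le_of_lt (lt_of_abs_lt this)
    obtain ⟨M, hM⟩ := ((hdiv.eventually_ge_atTop ((1 + g L) / (ε / 2) + 1)).and
      (eventually_ge_atTop (max L 1))).exists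
    obtain ⟨hMf, hML⟩ := hM
    have hML' : L ≤ M := le_trans (le_max_left _ _) hML
    have hM1 : 1 ≤ M := le_trans (le_max_right _ _) hML
    refine ⟨(1 + g M) / f M, ⟨M, hM1, rfl⟩, ?_⟩
    have hfM : 0 < f M := hfpos M hM1
    -- g M ≤ g L + (ε/2) * f M
    have hicc : ∀ N : ℕ, Finset.Icc 1 N = Finset.Ioc 0 N := fun N => by
      rw [← Finset.Icc_add_one_left_eq_Ioc, zero_add]
    have hsplit : g M = g L + ∑ ℓ ∈ Finset.Ioc L M, tg ℓ := by
      simp only [hg, hicc]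
      rw [← Finset.sum_Ioc_consecutive _ (Nat.zero_le L) hML']
    have htail : ∑ ℓ ∈ Finset.Ioc L M, tg ℓ ≤ (ε / 2) * f M := by
      have h1 : ∑ ℓ ∈ Finset.Ioc L M, tg ℓ ≤ ∑ ℓ ∈ Finset.Ioc L M, (ε / 2) * tf ℓ := by
        apply Finset.sum_le_sum
        intro i hi
        have hiL : L ≤ i := le_of_lt (Finset.mem_Ioc.mp hi).1
        have h2 : 1 - Real.exp (-r i) ≤ r i := by
          have := Real.add_one_le_exp (-r i)
          linarith
        have : 1 - Real.exp (-r i) ≤ ε / 2 := le_trans h2 (hrsmall i hiL)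
        calc tg i ≤ tf i * (ε / 2) :=
              mul_le_mul_of_nonneg_left this (htfpos i).le
          _ = (ε / 2) * tf i := mul_comm _ _
      rw [← Finset.mul_sum] at h1
      refine h1.trans (mul_le_mul_of_nonneg_left ?_ (half_pos hε).le)
      rw [hf]
      simp only [hicc]
      exact Finset.sum_le_sum_of_subset_of_nonneg
        (Finset.Ioc_subset_Ioc (Nat.zero_le L) le_rfl)
        (fun i _ _ => (htfpos i).le)
    have hgM : g M ≤ g L + (ε / 2) * f M := by
      rw [hsplit]; linarith
    have hA : (1 + g L) / f M < ε / 2 := by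
      rw [div_lt_iff₀ hfM]
      have h1gL : 0 ≤ 1 + g L := by linarith [hgnn L]
      have : (1 + g L) / (ε / 2) < f M := by linarith
      calc 1 + g L = ((1 + g L) / (ε / 2)) * (ε / 2) := by
            field_simp
        _ < f M * (ε / 2) := by
            exact mul_lt_mul_of_pos_right this (half_pos hε)
        _ = ε / 2 * f M := mul_comm _ _
    calc (1 + g M) / f M ≤ (1 + g L + (ε / 2) * f M) / f M := by
          exact div_le_div_of_nonneg_right (by linarith) hfM.le
      _ = (1 + g L) / f M + ε / 2 := by
          rw [add_div, mul_div_assoc, div_self hfM.ne', mul_one]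
      _ < ε / 2 + ε / 2 := by linarith
      _ = ε := by ring
  have hup : sInf S ≤ 0 := by
    by_contra h
    push_neg at h
    obtain ⟨x, hxS, hx⟩ := hkey (sInf S) h
    exact absurd (csInf_le hbdd hxS) (not_le.mpr hx)
  linarith
end
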